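/- Let P ⊆ ℝ^d_+ be a nonempty convex lower comprehensive set contained in [0,1]^d, i.e., x ∈ P, 0 ≤ y ≤ x implies y ∈ P. Then N(P) and N_+(P) are lower comprehensive. Concretely: if x ∈ N(P) (resp. N_+(P)) and j is such that x_j > 0, then x − x_j e_j ∈ N(P) (resp. N_+(P)). -/

import Mathlib

def LSM (d : ℕ) (K : Set (Fin (d + 1) → ℝ)) : Set (Matrix (Fin (d + 1)) (Fin (d + 1)) ℝ) :=
  {Y | Y.IsSymm ∧ Y.mulVec (Pi.single 0 1) = Matrix.diag Y ∧
    ∀ i : Fin d, Y.mulVec (Pi.single i.succ 1) ∈ K ∧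
      Y.mulVec (Pi.single 0 1 - Pi.single i.succ 1) ∈ K}

def LSMplus (d : ℕ) (K : Set (Fin (d + 1) → ℝ)) :
    Set (Matrix (Fin (d + 1)) (Fin (d + 1)) ℝ) :=
  {Y | Y ∈ LSM d K ∧ Y.PosSemidef}

def homog (d : ℕ) (P : Set (Fin d → ℝ)) : Set (Fin (d + 1) → ℝ) :=
  {y | ∃ (l : ℝ) (x : Fin d → ℝ), 0 ≤ l ∧ x ∈ P ∧ y = l • (Fin.cons 1 x : Fin (d + 1) → ℝ)}

def NP (d : ℕ) (P : Set (Fin d → ℝ)) : Set (Fin d → ℝ) :=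
  {x | ∃ Y ∈ LSM d (homog d P), Matrix.diag Y = Fin.cons 1 x}

def NPplus (d : ℕ) (P : Set (Fin d → ℝ)) : Set (Fin d → ℝ) :=
  {x | ∃ Y ∈ LSMplus d (homog d P), Matrix.diag Y = Fin.cons 1 x}

section Aux

variable {d : ℕ} {P : Set (Fin d → ℝ)}

/-- zeroing the (j.succ)-entry preserves membership in the homogenization cone -/
lemma homog_update (hPbox : ∀ x ∈ P, ∀ i, 0 ≤ x i ∧ x i ≤ 1)
    (hlc : ∀ x ∈ P, ∀ y : Fin d → ℝ, (∀ i, 0 ≤ y i) → (∀ i, y i ≤ x i) → y ∈ P)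
    {v : Fin (d+1) → ℝ} (hv : v ∈ homog d P) (j : Fin d) :
    Function.update v j.succ 0 ∈ homog d P := by
  obtain ⟨l, u, hl, hu, rfl⟩ := hv
  refine ⟨l, Function.update u j 0, hl, ?_, ?_⟩
  · refine hlc u hu _ (fun i => ?_) (fun i => ?_)
    · rcases eq_or_ne i j with rfl | h
      · simp
      · simpa [Function.update_of_ne h] using (hPbox u hu i).1
    · rcases eq_or_ne i j with rfl | h
      · simpa using (hPbox u hu i).1
      · simp [Function.update_of_ne h]
  · funext k
    rcases eq_or_ne k j.succ with rfl | hk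
    · simp
    · rw [Function.update_of_ne hk]
      induction k using Fin.cases with
      | zero => simp only [Pi.smul_apply, Fin.cons_zero]
      | succ i =>
        have hij : i ≠ j := fun h => hk (by rw [h])
        simp only [Pi.smul_apply, Fin.cons_succ, Function.update_of_ne hij]

/-- the homogenization cone is closed under addition when P is convex -/
lemma homog_add (hPconv : Convex ℝ P) {v w : Fin (d+1) → ℝ}
    (hv : v ∈ homog d P) (hw : w ∈ homog d P) : v + w ∈ homog d P := by
  obtain ⟨a, u, ha, hu, rfl⟩ := hv
  obtain ⟨b, t, hb, ht, rfl⟩ := hw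
  rcases eq_or_lt_of_le (add_nonneg ha hb) with h0 | hpos
  · have ha0 : a = 0 := by linarith [ha, hb]
    have hb0 : b = 0 := by linarith
    exact ⟨0, u, le_refl 0, hu, by simp [ha0, hb0]⟩
  · set l : ℝ := a + b with hl
    refine ⟨l, (a / l) • u + (b / l) • t, le_of_lt hpos, ?_, ?_⟩
    · exact hPconv hu ht (div_nonneg ha hpos.le) (div_nonneg hb hpos.le)
        (by field_simp; linarith)
    · funext k
      induction k using Fin.cases with
      | zero => simp [hl]
      | succ i =>
        have hlne : l ≠ 0 := ne_of_gt hpos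
        simp only [Pi.add_apply, Pi.smul_apply, Fin.cons_succ, smul_eq_mul]
        first
        | (field_simp; ring)
        | field_simp

end Aux

open Matrix in

theorem stmt19 (d : ℕ) (P : Set (Fin d → ℝ)) (hne : P.Nonempty)
    (hPconv : Convex ℝ P) (hPbox : ∀ x ∈ P, ∀ i, 0 ≤ x i ∧ x i ≤ 1)
    (hlc : ∀ x ∈ P, ∀ y : Fin d → ℝ, (∀ i, 0 ≤ y i) → (∀ i, y i ≤ x i) → y ∈ P) :
    (∀ x ∈ NP d P, ∀ j : Fin d, 0 < x j → Function.update x j 0 ∈ NP d P) ∧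
    (∀ x ∈ NPplus d P, ∀ j : Fin d, 0 < x j → Function.update x j 0 ∈ NPplus d P) := by
  have hx0 := hne
  obtain ⟨x0, hx0P⟩ := hx0
  have key : ∀ (Y : Matrix (Fin (d+1)) (Fin (d+1)) ℝ) (x : Fin d → ℝ) (j : Fin d),
      Y ∈ LSM d (homog d P) → Matrix.diag Y = Fin.cons 1 x →
      ((Matrix.diagonal (fun k => if k = j.succ then (0:ℝ) else 1) * Y *
             Matrix.diagonal (fun k => if k = j.succ then (0:ℝ) else 1)) ∈ LSM d (homog d P) ∧
        Matrix.diag (Matrix.diagonal (fun k => if k = j.succ then (0:ℝ) else 1) * Y *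
             Matrix.diagonal (fun k => if k = j.succ then (0:ℝ) else 1))
          = Fin.cons 1 (Function.update x j 0)) := by
    intro Y x j hY hdiag
    obtain ⟨hsymm, hcol0, hcols⟩ := hY
    set dd : Fin (d+1) → ℝ := fun k => if k = j.succ then (0:ℝ) else 1 with hdd
    set D : Matrix (Fin (d+1)) (Fin (d+1)) ℝ := Matrix.diagonal dd with hD
    have hY' : ∀ k m, (D * Y * D) k m = dd k * Y k m * dd m := by
      intro k m
      rw [hD, Matrix.mul_diagonal, Matrix.diagonal_mul]
    have hYkk : ∀ k, Y k k = (Fin.cons 1 x : Fin (d+1) → ℝ) k := fun k => congrFun hdiag k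
    have hYk0 : ∀ k, Y k 0 = Y k k := by
      intro k
      have := congrFun hcol0 k
      rw [Matrix.mulVec_single] at this
      simpa using this
    have hdd0 : dd 0 = 1 := by simp [hdd, (Fin.succ_ne_zero j).symm]
    have hddj : dd j.succ = 0 := by simp [hdd]
    -- x ∈ P
    have hxP : x ∈ P := by
      have hsum : Y.mulVec (Pi.single j.succ 1) +
          Y.mulVec (Pi.single 0 1 - Pi.single j.succ 1) ∈ homog d P :=
        homog_add hPconv (hcols j).1 (hcols j).2
      have heq : Y.mulVec (Pi.single j.succ 1) +
          Y.mulVec (Pi.single 0 1 - Pi.single j.succ 1) = Fin.cons 1 x := by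
        rw [← Matrix.mulVec_add]
        simp only [add_sub_cancel]
        rw [hcol0, hdiag]
      rw [heq] at hsum
      obtain ⟨l, u, hl, hu, hequ⟩ := hsum
      have h0 := congrFun hequ 0
      simp only [Fin.cons_zero, Pi.smul_apply, smul_eq_mul, mul_one] at h0
      have : x = u := by
        funext i
        have := congrFun hequ i.succ
        simp only [Fin.cons_succ, Pi.smul_apply, smul_eq_mul, ← h0, one_mul] at this
        exact this
      rwa [this]
    have hxnn : ∀ i, 0 ≤ x i := fun i => (hPbox x hxP i).1
    have hupdP : Function.update x j 0 ∈ P := by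
      refine hlc x hxP _ (fun i => ?_) (fun i => ?_)
      · rcases eq_or_ne i j with rfl | h
        · simp
        · simpa [Function.update_of_ne h] using hxnn i
      · rcases eq_or_ne i j with rfl | h
        · simpa using hxnn i
        · simp [Function.update_of_ne h]
    have hdiag' : Matrix.diag (D * Y * D) = Fin.cons 1 (Function.update x j 0) := by
      funext k
      simp only [Matrix.diag_apply, hY']
      induction k using Fin.cases with
      | zero => simp [hdd0, hYkk 0]
      | succ i =>
        rcases eq_or_ne i j with rfl | h
        · simp [hddj]
        · have : dd i.succ = 1 := by
            simp [hdd, h]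
          simp [this, hYkk i.succ, Function.update_of_ne h]
    refine ⟨⟨?_, ?_, fun i => ⟨?_, ?_⟩⟩, hdiag'⟩
    · -- symmetry
      show (D * Y * D)ᵀ = D * Y * D
      rw [Matrix.transpose_mul, Matrix.transpose_mul, hD, Matrix.diagonal_transpose, hsymm]
      rw [Matrix.mul_assoc]
    · -- column 0 equals diagonal
      funext k
      rw [Matrix.mulVec_single]
      simp only [Matrix.diag_apply, hY', mul_one, hdd0]
      rcases eq_or_ne k j.succ with rfl | hk
      · simp [hY', hddj]
      · have hk1 : dd k = 1 := by simp [hdd, hk]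
        simp [hY', hdd0, hk1, hYk0 k]
    · -- column i.succ ∈ homog
      rcases eq_or_ne i j with rfl | h
      · have : (D * Y * D).mulVec (Pi.single i.succ 1) = 0 := by
          funext k
          rw [Matrix.mulVec_single]
          simp [hY', hddj]
        rw [this]
        exact ⟨0, x0, le_refl 0, hx0P, by simp⟩
      · have hdi : dd i.succ = 1 := by
          simp [hdd, h]
        have : (D * Y * D).mulVec (Pi.single i.succ 1) =
            Function.update (Y.mulVec (Pi.single i.succ 1)) j.succ 0 := by
          funext k
          rw [Matrix.mulVec_single]
          rcases eq_or_ne k j.succ with rfl | hk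
          · simp [hY', hddj]
          · have hk1 : dd k = 1 := by simp [hdd, hk]
            rw [Function.update_of_ne hk, Matrix.mulVec_single]
            simp [hY', hk1, hdi]
        rw [this]
        exact homog_update hPbox hlc (hcols i).1 j
    · -- column 0 - i.succ ∈ homog
      rcases eq_or_ne i j with rfl | h
      · have : (D * Y * D).mulVec (Pi.single 0 1 - Pi.single i.succ 1) =
            Fin.cons 1 (Function.update x i 0) := by
          rw [Matrix.mulVec_sub]
          funext k
          have hz : (D * Y * D).mulVec (Pi.single i.succ 1) k = 0 := by
            rw [Matrix.mulVec_single]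
            show (D * Y * D) k i.succ * 1 = 0
            rw [hY', hddj]; ring
          simp only [Pi.sub_apply, hz, sub_zero, Matrix.mulVec_single, mul_one]
          rw [← hdiag']
          simp only [Matrix.diag_apply, hY', hdd0, mul_one]
          rcases eq_or_ne k i.succ with rfl | hk
          · simp [hY', hddj]
          · have hk1 : dd k = 1 := by simp [hdd, hk]
            simp [hY', hdd0, hk1, hYk0 k, hddj]
        rw [this]
        exact ⟨1, Function.update x i 0, zero_le_one, hupdP, by simp⟩
      · have hdi : dd i.succ = 1 := by
          simp [hdd, h]
        have : (D * Y * D).mulVec (Pi.single 0 1 - Pi.single i.succ 1) =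
            Function.update (Y.mulVec (Pi.single 0 1 - Pi.single i.succ 1)) j.succ 0 := by
          rw [Matrix.mulVec_sub, Matrix.mulVec_sub]
          funext k
          rcases eq_or_ne k j.succ with rfl | hk
          · simp [Matrix.mulVec_single, hY', hddj]
          · have hk1 : dd k = 1 := by simp [hdd, hk]
            rw [Function.update_of_ne hk]
            simp [Matrix.mulVec_single, hY', hk1, hdi, hdd0]
        rw [this]
        exact homog_update hPbox hlc (hcols i).2 j
  constructor
  · rintro x ⟨Y, hY, hdiag⟩ j hj
    obtain ⟨h1, h2⟩ := key Y x j hY hdiag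
    exact ⟨_, h1, h2⟩
  · rintro x ⟨Y, ⟨hY, hpsd⟩, hdiag⟩ j hj
    obtain ⟨h1, h2⟩ := key Y x j hY hdiag
    refine ⟨_, ⟨h1, ?_⟩, h2⟩
    have hDh : (Matrix.diagonal (fun k => if k = j.succ then (0:ℝ) else 1))ᴴ =
        Matrix.diagonal (fun k => if k = j.succ then (0:ℝ) else 1) := by
      rw [Matrix.diagonal_conjTranspose]
      simp
    have := hpsd.mul_mul_conjTranspose_same
      (Matrix.diagonal (fun k => if k = j.succ then (0:ℝ) else 1))
    rwa [hDh] at this
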